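/- On any connected piece of the preimage of the unit circle, the symmetry s₃ acts uniformly: if B ⊆ P is a preconnected set such that every (z,w) ∈ B has |z| = 1 (z·conj z = 1) and w ≠ 0, then either s₃(p) = p for every p ∈ B, or s₃(p) = T(p) for every p ∈ B. -/

import Mathlib

noncomputable section
open Complex ComplexConjugate

/-- `α = exp(iπ/4)`. -/
def bolzaAlpha : ℂ := Complex.exp (Real.pi * Complex.I / 4)

/-- `β = exp(3iπ/4)`. -/
def bolzaBeta : ℂ := Complex.exp (3 * Real.pi * Complex.I / 4)

/-- The affine Bolza curve `P = {(z,w) : w²(z+α)(z+β) = z(z−α)(z−β)}`. -/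
def BolzaCurve : Set (ℂ × ℂ) :=
  {p | p.2 ^ 2 * (p.1 + bolzaAlpha) * (p.1 + bolzaBeta)
       = p.1 * (p.1 - bolzaAlpha) * (p.1 - bolzaBeta)}

/-- The symmetry `s₁(z,w) = (conj z, conj z / conj w)`. -/
def s1 (p : ℂ × ℂ) : ℂ × ℂ := (conj p.1, conj p.1 / conj p.2)

/-- The symmetry `s₂(z,w) = (−conj z, i·conj w)`. -/
def s2 (p : ℂ × ℂ) : ℂ × ℂ := (-conj p.1, Complex.I * conj p.2)

/-- The symmetry `s₃(z,w) = (1/conj z, conj w / conj z)`. -/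
def s3 (p : ℂ × ℂ) : ℂ × ℂ := (1 / conj p.1, conj p.2 / conj p.1)

/-- The hyperelliptic involution `T(z,w) = (z,−w)`. -/
def hypT (p : ℂ × ℂ) : ℂ × ℂ := (p.1, -p.2)

lemma bolzaAlpha_mul_conj : bolzaAlpha * conj bolzaAlpha = 1 := by
  unfold bolzaAlpha
  rw [← Complex.exp_conj, ← Complex.exp_add]
  have : (↑Real.pi * Complex.I / 4) + conj (↑Real.pi * Complex.I / 4) = 0 := by
    simp [map_div₀, Complex.conj_I, Complex.conj_ofReal, map_ofNat]; ring
  rw [this, Complex.exp_zero]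

lemma bolzaAlpha_ne_zero : bolzaAlpha ≠ 0 := Complex.exp_ne_zero _

lemma bolzaBeta_eq : bolzaBeta = Complex.I * bolzaAlpha := by
  unfold bolzaAlpha bolzaBeta
  have h2 : Complex.exp (Real.pi * Complex.I / 2) = Complex.I := by
    have e : (Real.pi * Complex.I / 2 : ℂ) = (Real.pi / 2 : ℂ) * Complex.I := by ring
    rw [e, Complex.exp_mul_I]
    simp
  have h3 : (3 * (Real.pi:ℂ) * Complex.I / 4)
      = Real.pi * Complex.I / 2 + Real.pi * Complex.I / 4 := by ring
  rw [h3, Complex.exp_add, h2]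

/-- Pointwise: on the curve over the unit circle, `z·conj w = ±w`. -/
lemma bolza_pointwise (z w : ℂ)
    (h : w ^ 2 * (z + bolzaAlpha) * (z + bolzaBeta)
      = z * (z - bolzaAlpha) * (z - bolzaBeta))
    (hz : z * conj z = 1) (hw : w ≠ 0) :
    z * conj w = w ∨ z * conj w = -w := by
  set a : ℂ := bolzaAlpha with ha_def
  have ha : a * conj a = 1 := bolzaAlpha_mul_conj
  have ha0 : a ≠ 0 := bolzaAlpha_ne_zero
  rw [bolzaBeta_eq, ← ha_def] at h
  have hz0 : z ≠ 0 := by rintro rfl; simp at hz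
  have hcz : conj z = z⁻¹ := by field_simp; linear_combination hz
  have hca : conj a = a⁻¹ := by field_simp; linear_combination ha
  have hi : (1 : ℂ) + Complex.I ≠ 0 := by simp [Complex.ext_iff]
  have hza : z + a ≠ 0 := by
    intro e
    have hz' : z = -a := by linear_combination e
    rw [hz'] at h
    ring_nf at h
    have h2 : a ^ 3 * (1 + Complex.I) = 0 := by linear_combination ((1/2 : ℂ)) * h
    rcases mul_eq_zero.mp h2 with h' | h'
    · exact ha0 ((pow_eq_zero_iff three_ne_zero).mp h')
    · exact hi h'
  have hzb : z + Complex.I * a ≠ 0 := by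
    intro e
    have hz' : z = -(Complex.I * a) := by linear_combination e
    rw [hz'] at h
    ring_nf at h
    have h2 : a ^ 3 * (1 + Complex.I) = 0 := by
      linear_combination (-(1/2 : ℂ)) * h + a ^ 3 * (1 + Complex.I) * Complex.I_sq
    rcases mul_eq_zero.mp h2 with h' | h'
    · exact ha0 ((pow_eq_zero_iff three_ne_zero).mp h')
    · exact hi h'
  have hc := congrArg conj h
  simp only [map_mul, map_add, map_sub, map_pow, Complex.conj_I, hcz, hca] at hc
  field_simp at hc
  have key : ((z * conj w - w) * (z * conj w + w))
      * ((z + a) * (z + Complex.I * a) * z ^ 2 * a ^ 2) = 0 := by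
    linear_combination (-(z ^ 2 * a ^ 2)) * h + (Complex.I * z ^ 3 * a ^ 2) * hc
      + (z ^ 5 * a ^ 2 * (conj w) ^ 2 * (z + a) - z ^ 4 * a ^ 2 * (z - a)) * Complex.I_sq
  have hne : (z + a) * (z + Complex.I * a) * z ^ 2 * a ^ 2 ≠ 0 :=
    mul_ne_zero (mul_ne_zero (mul_ne_zero hza hzb) (pow_ne_zero _ hz0))
      (pow_ne_zero _ ha0)
  rcases mul_eq_zero.mp key with h' | h'
  · rcases mul_eq_zero.mp h' with h'' | h''
    · left; linear_combination h''
    · right; linear_combination h''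
  · exact absurd h' hne

theorem s3_uniform_on_preconnected (B : Set (ℂ × ℂ)) (hBP : B ⊆ BolzaCurve)
    (hconn : IsPreconnected B)
    (hcirc : ∀ p ∈ B, p.1 * conj p.1 = 1 ∧ p.2 ≠ 0) :
    (∀ p ∈ B, s3 p = p) ∨ (∀ p ∈ B, s3 p = hypT p) := by
  set u : Set (ℂ × ℂ) :=
    {q | ‖q.1 * conj q.2 - q.2‖ < ‖q.1 * conj q.2 + q.2‖} with hu_def
  set v : Set (ℂ × ℂ) :=
    {q | ‖q.1 * conj q.2 + q.2‖ < ‖q.1 * conj q.2 - q.2‖} with hv_def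
  have hcont1 : Continuous fun q : ℂ × ℂ => ‖q.1 * conj q.2 - q.2‖ :=
    ((continuous_fst.mul (Complex.continuous_conj.comp continuous_snd)).sub
      continuous_snd).norm
  have hcont2 : Continuous fun q : ℂ × ℂ => ‖q.1 * conj q.2 + q.2‖ :=
    ((continuous_fst.mul (Complex.continuous_conj.comp continuous_snd)).add
      continuous_snd).norm
  have hu : IsOpen u := isOpen_lt hcont1 hcont2
  have hv : IsOpen v := isOpen_lt hcont2 hcont1
  have hdisj : Disjoint u v := by
    rw [Set.disjoint_left]
    intro q hq hq'
    have h1 : ‖q.1 * conj q.2 - q.2‖ < ‖q.1 * conj q.2 + q.2‖ := hq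
    have h2 : ‖q.1 * conj q.2 + q.2‖ < ‖q.1 * conj q.2 - q.2‖ := hq'
    exact lt_asymm h1 h2
  have hpw : ∀ p ∈ B, p.1 * conj p.2 = p.2 ∨ p.1 * conj p.2 = -p.2 := by
    intro p hp
    exact bolza_pointwise p.1 p.2 (hBP hp) (hcirc p hp).1 (hcirc p hp).2
  have hcover : B ⊆ u ∪ v := by
    intro p hp
    have hw : p.2 ≠ 0 := (hcirc p hp).2
    rcases hpw p hp with h | h
    · left
      show ‖p.1 * conj p.2 - p.2‖ < ‖p.1 * conj p.2 + p.2‖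
      rw [h]
      simp only [sub_self, norm_zero]
      have e : p.2 + p.2 = 2 * p.2 := by ring
      rw [e]
      exact norm_pos_iff.mpr (mul_ne_zero two_ne_zero hw)
    · right
      show ‖p.1 * conj p.2 + p.2‖ < ‖p.1 * conj p.2 - p.2‖
      rw [h]
      simp only [neg_add_cancel, norm_zero]
      have e : -p.2 - p.2 = -(2 * p.2) := by ring
      rw [e, norm_neg]
      exact norm_pos_iff.mpr (mul_ne_zero two_ne_zero hw)
  have hconj_ne : ∀ p ∈ B, conj p.1 ≠ 0 := by
    intro p hp e
    have h1 := (hcirc p hp).1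
    rw [e, mul_zero] at h1
    exact one_ne_zero h1.symm
  have hfirst : ∀ p ∈ B, (1 : ℂ) / conj p.1 = p.1 := by
    intro p hp
    rw [div_eq_iff (hconj_ne p hp)]
    exact (hcirc p hp).1.symm
  rcases IsPreconnected.subset_or_subset hu hv hdisj hcover hconn with hB | hB
  · left
    intro p hp
    rcases hpw p hp with h | h
    · show (1 / conj p.1, conj p.2 / conj p.1) = p
      rw [Prod.ext_iff]
      refine ⟨hfirst p hp, ?_⟩
      show conj p.2 / conj p.1 = p.2
      rw [div_eq_iff (hconj_ne p hp)]
      linear_combination (conj p.1) * h - (conj p.2) * (hcirc p hp).1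
    · exfalso
      have h1 : ‖p.1 * conj p.2 - p.2‖ < ‖p.1 * conj p.2 + p.2‖ := hB hp
      rw [h] at h1
      simp only [neg_add_cancel, norm_zero] at h1
      exact absurd h1 (not_lt.mpr (norm_nonneg _))
  · right
    intro p hp
    rcases hpw p hp with h | h
    · exfalso
      have h1 : ‖p.1 * conj p.2 + p.2‖ < ‖p.1 * conj p.2 - p.2‖ := hB hp
      rw [h] at h1
      simp only [sub_self, norm_zero] at h1
      exact absurd h1 (not_lt.mpr (norm_nonneg _))
    · show (1 / conj p.1, conj p.2 / conj p.1) = (p.1, -p.2)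
      rw [Prod.ext_iff]
      refine ⟨hfirst p hp, ?_⟩
      show conj p.2 / conj p.1 = -p.2
      rw [div_eq_iff (hconj_ne p hp)]
      linear_combination (conj p.1) * h - (conj p.2) * (hcirc p hp).1

end
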